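/- Let X be a type, n a natural number, and I_1, …, I_k finite subsets of Fin n, each of cardinality at least 2. Then there exist pairwise disjoint finite subsets J_1, …, J_{k'} of Fin n with k' ≤ k such that: each J_j equals the union of those I_l that are contained in J_j; each J_j contains at least one I_l; every I_l is contained in exactly one J_j; and ⋂_{l=1}^{k} Δ_{I_l} = ⋂_{j=1}^{k'} Δ_{J_j} as subsets of Fin n → X. -/

import Mathlib

/-- The diagonal Δ_S: the set of functions `Fin n → X` that are constant on `S`. -/
def diag {X : Type*} {n : ℕ} (S : Finset (Fin n)) : Set (Fin n → X) :=
  {x | ∀ a ∈ S, ∀ b ∈ S, x a = x b}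

theorem diag_mono {X : Type*} {n : ℕ} {A B : Finset (Fin n)} (h : A ⊆ B) :
    diag (X := X) B ⊆ diag (X := X) A :=
  fun x hx a ha b hb => hx a (h ha) b (h hb)

theorem diag_aux {X : Type*} {n : ℕ} : ∀ (k : ℕ) (I : Fin k → Finset (Fin n)),
    (∀ l, (I l).Nonempty) →
    ∃ (ι : Type) (_ : Fintype ι) (J : ι → Finset (Fin n)), Fintype.card ι ≤ k ∧
      (Pairwise fun j j' => Disjoint (J j) (J j')) ∧
      (∀ j, J j = (Finset.univ.filter (fun l => I l ⊆ J j)).biUnion I) ∧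
      (∀ j, ∃ l, I l ⊆ J j) ∧
      (∀ l, ∃ j, I l ⊆ J j) ∧
      (⋂ l, diag (X := X) (I l)) = ⋂ j, diag (X := X) (J j) := by
  intro k
  induction k with
  | zero =>
    intro I hI
    refine ⟨Empty, inferInstance, fun j => j.elim, by simp, fun j => j.elim,
      fun j => j.elim, fun j => j.elim, fun l => l.elim0, ?_⟩
    simp
  | succ k ih =>
    intro I hI
    classical
    obtain ⟨ι, instι, J, hcard, hdisj, hunion, hex, hcov, hdiag⟩ :=
      ih (fun m => I m.succ) (fun m => hI m.succ)
    set P : ι → Prop := fun j => Disjoint (J j) (I 0) with hP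
    set K : Finset (Fin n) := I 0 ∪ (Finset.univ.filter (fun j => ¬ P j)).biUnion J with hK
    have hI0K : I 0 ⊆ K := Finset.subset_union_left
    have hJK : ∀ j, ¬ P j → J j ⊆ K := by
      intro j hj
      refine Finset.Subset.trans ?_ Finset.subset_union_right
      exact Finset.subset_biUnion_of_mem J (by simp [hj])
    refine ⟨Option {j : ι // P j}, inferInstance,
      fun o => o.elim K (fun j => J j.1), ?_, ?_, ?_, ?_, ?_, ?_⟩
    · calc Fintype.card (Option {j : ι // P j})
          = Fintype.card {j : ι // P j} + 1 := Fintype.card_option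
        _ ≤ k + 1 := Nat.add_le_add_right ((Fintype.card_subtype_le P).trans hcard) 1
    · -- pairwise disjoint
      have hKdisj : ∀ (j : ι), P j → Disjoint K (J j) := by
        intro j hj
        rw [hK, Finset.disjoint_union_left]
        constructor
        · exact hj.symm
        · rw [Finset.disjoint_biUnion_left]
          intro j' hj'
          simp only [Finset.mem_filter] at hj'
          exact hdisj (fun h => hj'.2 (h ▸ hj))
      rintro (_ | ⟨j, hj⟩) (_ | ⟨j', hj'⟩) hne
      · exact absurd rfl hne
      · exact hKdisj j' hj'
      · exact (hKdisj j hj).symm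
      · exact hdisj (fun h => hne (by simp [Subtype.ext h]))
    · -- union property
      rintro (_ | ⟨j, hj⟩)
      · -- K case
        show K = (Finset.univ.filter (fun l => I l ⊆ K)).biUnion I
        apply Finset.Subset.antisymm
        · intro a ha
          rw [hK, Finset.mem_union] at ha
          rcases ha with ha | ha
          · exact Finset.mem_biUnion.2 ⟨0, by simp [hI0K], ha⟩
          · rw [Finset.mem_biUnion] at ha
            obtain ⟨j, hjmem, haj⟩ := ha
            simp only [Finset.mem_filter] at hjmem
            have := hunion j
            rw [this, Finset.mem_biUnion] at haj
            obtain ⟨m, hmmem, ham⟩ := haj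
            simp only [Finset.mem_filter] at hmmem
            refine Finset.mem_biUnion.2 ⟨m.succ, ?_, ham⟩
            simp only [Finset.mem_filter, Finset.mem_univ, true_and]
            exact hmmem.2.trans ((this ▸ hJK j hjmem.2 : _))
        · intro a ha
          rw [Finset.mem_biUnion] at ha
          obtain ⟨l, hl, hal⟩ := ha
          simp only [Finset.mem_filter] at hl
          exact hl.2 hal
      · -- old J j case
        show J j = _
        apply Finset.Subset.antisymm
        · intro a ha
          have := hunion j
          rw [this, Finset.mem_biUnion] at ha
          obtain ⟨m, hmmem, ham⟩ := ha
          simp only [Finset.mem_filter] at hmmem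
          exact Finset.mem_biUnion.2 ⟨m.succ, Finset.mem_filter.2 ⟨Finset.mem_univ _, hmmem.2⟩, ham⟩
        · intro a ha
          rw [Finset.mem_biUnion] at ha
          obtain ⟨l, hl, hal⟩ := ha
          simp only [Finset.mem_filter] at hl
          exact hl.2 hal
    · -- each J' contains some I l
      rintro (_ | ⟨j, hj⟩)
      · exact ⟨0, hI0K⟩
      · obtain ⟨m, hm⟩ := hex j
        exact ⟨m.succ, hm⟩
    · -- coverage
      intro l
      refine Fin.cases ?_ ?_ l
      · exact ⟨none, hI0K⟩
      · intro m
        obtain ⟨j, hj⟩ := hcov m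
        by_cases hPj : P j
        · exact ⟨some ⟨j, hPj⟩, hj⟩
        · exact ⟨none, hj.trans (hJK j hPj)⟩
    · -- diag equality
      ext x
      simp only [Set.mem_iInter]
      constructor
      · intro h
        have hJd : ∀ j, x ∈ diag (X := X) (J j) := by
          have : x ∈ ⋂ m, diag (X := X) (I (Fin.succ m)) :=
            Set.mem_iInter.2 (fun m => h m.succ)
          rw [hdiag] at this
          exact fun j => Set.mem_iInter.1 this j
        rintro (_ | ⟨j, hj⟩)
        · -- diag K
          show x ∈ diag (X := X) K
          obtain ⟨pt, hpt⟩ := hI 0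
          have key : ∀ a ∈ K, x a = x pt := by
            intro a ha
            rw [hK, Finset.mem_union] at ha
            rcases ha with ha | ha
            · exact h 0 a ha pt hpt
            · rw [Finset.mem_biUnion] at ha
              obtain ⟨j, hjmem, haj⟩ := ha
              simp only [Finset.mem_filter] at hjmem
              obtain ⟨c, hcJ, hcI⟩ := Finset.not_disjoint_iff.1 hjmem.2
              exact (hJd j a haj c hcJ).trans (h 0 c hcI pt hpt)
          exact fun a ha b hb => (key a ha).trans (key b hb).symm
        · exact hJd j
      · intro h l
        have hcov' : ∃ (o : Option {j : ι // P j}),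
            I l ⊆ o.elim K (fun j => J j.1) := by
          refine Fin.cases ?_ ?_ l
          · exact ⟨none, hI0K⟩
          · intro m
            obtain ⟨j, hj⟩ := hcov m
            by_cases hPj : P j
            · exact ⟨some ⟨j, hPj⟩, hj⟩
            · exact ⟨none, hj.trans (hJK j hPj)⟩
        obtain ⟨o, ho⟩ := hcov'
        exact diag_mono ho (h o)

/-- Any intersection of diagonals `Δ_{I 1} ∩ ⋯ ∩ Δ_{I k}` (with each `|I l| ≥ 2`) can be
rewritten uniquely as an intersection of diagonals `Δ_{J 1} ∩ ⋯ ∩ Δ_{J k'}` where the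
`J j` are pairwise disjoint, each `J j` is the union of the `I l` it contains, each `J j`
contains some `I l`, and each `I l` is contained in exactly one `J j`. -/
theorem iInter_diag_eq_iInter_diag_pairwise_disjoint {X : Type*} {n k : ℕ}
    (I : Fin k → Finset (Fin n)) (hI : ∀ l, 2 ≤ (I l).card) :
    ∃ (k' : ℕ) (J : Fin k' → Finset (Fin n)), k' ≤ k ∧
      (∀ j j', j ≠ j' → Disjoint (J j) (J j')) ∧
      (∀ j, J j = (Finset.univ.filter (fun l => I l ⊆ J j)).biUnion I) ∧
      (∀ j, ∃ l, I l ⊆ J j) ∧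
      (∀ l, ∃! j, I l ⊆ J j) ∧
      (⋂ l, diag (X := X) (I l)) = ⋂ j, diag (X := X) (J j) := by
  have hIne : ∀ l, (I l).Nonempty := fun l => Finset.card_pos.mp (by have := hI l; omega)
  obtain ⟨ι, instι, J, hcard, hdisj, hunion, hex, hcov, hdiag⟩ := diag_aux k I hIne
  let e : ι ≃ Fin (Fintype.card ι) := Fintype.equivFin ι
  refine ⟨Fintype.card ι, fun j => J (e.symm j), hcard, ?_, ?_, ?_, ?_, ?_⟩
  · exact fun j j' hne => hdisj (fun h => hne (e.symm.injective h))
  · exact fun j => hunion (e.symm j)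
  · exact fun j => hex (e.symm j)
  · intro l
    obtain ⟨j, hj⟩ := hcov l
    refine ⟨e j, by simpa using hj, ?_⟩
    intro j' hj'
    by_contra hne
    have hd : Disjoint (J (e.symm j')) (J (e.symm (e j))) :=
      hdisj (fun h => hne (by simpa using congrArg e h))
    obtain ⟨a, ha⟩ := hIne l
    exact (Finset.disjoint_left.1 hd (hj' ha)) (by simpa using hj ha)
  · rw [hdiag]
    ext x
    simp only [Set.mem_iInter]
    exact ⟨fun h j => h (e.symm j), fun h i => by simpa using h (e i)⟩
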